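/- Fix h ∈ Sym^{1,1}(V) and α ∈ Λ^{1,1}(V*), and let Ã ∈ End(V) satisfy g(Ã(x), y) = α(x, y) for all x, y. For t ∈ ℝ with Id + t h invertible, set Tr^ℂ_{g_t}(α) := −(1/2) tr(J ∘ (Id + t h)^{-1} ∘ Ã), which is the complex trace of α with respect to the inner product g_t(x, y) := g((Id + t h)(x), y). Then the function t ↦ Tr^ℂ_{g_t}(α) is differentiable at t = 0 with derivative −(1/2) ⟨h, ρ_g^{-1}(α)⟩_g. -/

import Mathlib

open RealInnerProductSpace

lemma ringEquiv_ring_inverse {R S : Type*} [Ring R] [Ring S] (e : R ≃+* S) (x : R) :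
    Ring.inverse (e x) = e (Ring.inverse x) := by
  by_cases hx : IsUnit x
  · lift x to Rˣ using hx
    rw [Ring.inverse_unit]
    have : e (x : R) = (Units.map (e : R →* S) x : S) := rfl
    rw [this, Ring.inverse_unit]
    rfl
  · have hx' : ¬ IsUnit (e x) := by
      intro hu
      apply hx
      have := hu.map e.symm
      simpa using this
    rw [Ring.inverse_non_unit _ hx, Ring.inverse_non_unit _ hx', map_zero]

set_option synthInstance.maxHeartbeats 1000000 in
set_option maxHeartbeats 1000000 in
/-- first variation of the complex trace. With `h ∈ Sym^{1,1}(V)`,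
`α ∈ Λ^{1,1}(V*)` with associated endomorphism `Ã` and `h₀ = ρ_g⁻¹(α)`, the
function `t ↦ Tr^ℂ_{g_t}(α) = -(1/2) tr(J ∘ (Id + t h)⁻¹ ∘ Ã)` is differentiable
at `t = 0` with derivative `-(1/2)⟨h, ρ_g⁻¹(α)⟩_g`. -/
theorem stmt_5 {V : Type*} [NormedAddCommGroup V] [InnerProductSpace ℝ V]
    [FiniteDimensional ℝ V] (m : ℕ) (hm : 1 ≤ m)
    (hdim : Module.finrank ℝ V = 2 * m)
    (J : Module.End ℝ V) (hJ2 : J ∘ₗ J = -LinearMap.id)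
    (hJg : ∀ x y : V, ⟪J x, J y⟫ = ⟪x, y⟫)
    (h : Module.End ℝ V)
    (hsym : ∀ x y : V, ⟪h x, y⟫ = ⟪x, h y⟫)
    (hcomm : h ∘ₗ J = J ∘ₗ h)
    (α : V →ₗ[ℝ] V →ₗ[ℝ] ℝ)
    (halt : ∀ x : V, α x x = 0)
    (hJinv : ∀ x y : V, α (J x) (J y) = α x y)
    (A : Module.End ℝ V)
    (hA : ∀ x y : V, ⟪A x, y⟫ = α x y)
    (h₀ : Module.End ℝ V)
    (h₀sym : ∀ x y : V, ⟪h₀ x, y⟫ = ⟪x, h₀ y⟫)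
    (h₀comm : h₀ ∘ₗ J = J ∘ₗ h₀)
    (hρ : ∀ x y : V, ⟪J (h₀ x), y⟫ = α x y) :
    HasDerivAt
      (fun t : ℝ =>
        -(1/2 : ℝ) * LinearMap.trace ℝ V (J ∘ₗ Ring.inverse (1 + t • h) ∘ₗ A))
      (-(1/2 : ℝ) * LinearMap.trace ℝ V (h ∘ₗ LinearMap.adjoint h₀)) 0 := by
  -- the ring equivalence between `Module.End ℝ V` and `V →L[ℝ] V`
  let e : Module.End ℝ V ≃+* (V →L[ℝ] V) :=
    { LinearMap.toContinuousLinearMap (𝕜 := ℝ) (E := V) (F' := V) with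
      map_mul' := fun f g => rfl
      map_add' := fun f g => map_add (LinearMap.toContinuousLinearMap (𝕜 := ℝ) (E := V) (F' := V)) f g }
  have coe_e : ∀ f : Module.End ℝ V, ((e f : V →L[ℝ] V) : Module.End ℝ V) = f :=
    fun f => LinearMap.coe_toContinuousLinearMap f
  -- the inner derivative in the CLM algebra
  have hu : HasDerivAt (fun t : ℝ => (1 : V →L[ℝ] V) + t • e h) (e h) 0 := by
    simpa using ((hasDerivAt_id (0:ℝ)).smul_const (e h)).const_add (1 : V →L[ℝ] V)
  have hG : HasDerivAt (fun t : ℝ => Ring.inverse ((1 : V →L[ℝ] V) + t • e h))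
      (-(e h)) 0 := by
    have h1 : HasFDerivAt (Ring.inverse : (V →L[ℝ] V) → (V →L[ℝ] V))
        (-(ContinuousLinearMap.mulLeftRight ℝ (V →L[ℝ] V) 1 1))
        ((1 : ℝ) • (1 : V →L[ℝ] V)) := by
      simpa using hasFDerivAt_ringInverse (𝕜 := ℝ) (1 : (V →L[ℝ] V)ˣ)
    have h2 : HasFDerivAt (Ring.inverse : (V →L[ℝ] V) → (V →L[ℝ] V))
        (-(ContinuousLinearMap.mulLeftRight ℝ (V →L[ℝ] V) 1 1))
        ((1 : V →L[ℝ] V) + (0:ℝ) • e h) := by simpa using h1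
    have := h2.comp_hasDerivAt 0 hu
    exact this
  -- the linear functional on CLMs
  let Llin : (V →L[ℝ] V) →ₗ[ℝ] ℝ :=
    { toFun := fun B => LinearMap.trace ℝ V (J ∘ₗ (B : Module.End ℝ V) ∘ₗ A)
      map_add' := fun B C => by
        simp only [ContinuousLinearMap.coe_add, LinearMap.add_comp, LinearMap.comp_add,
          map_add]
      map_smul' := fun c B => by
        simp only [ContinuousLinearMap.coe_smul, LinearMap.smul_comp, LinearMap.comp_smul,
          map_smul, RingHom.id_apply] }
  have key : HasDerivAt (fun t : ℝ =>
      Llin (Ring.inverse ((1 : V →L[ℝ] V) + t • e h))) (Llin (-(e h))) 0 :=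
    (LinearMap.toContinuousLinearMap Llin).hasFDerivAt.comp_hasDerivAt 0 hG
  -- identify the function
  have hfun : ∀ t : ℝ, Llin (Ring.inverse ((1 : V →L[ℝ] V) + t • e h))
      = LinearMap.trace ℝ V (J ∘ₗ Ring.inverse (1 + t • h) ∘ₗ A) := by
    intro t
    have : ((1 : V →L[ℝ] V) + t • e h) = e (1 + t • h) := by
      ext x; simp [e]
    rw [this, ringEquiv_ring_inverse]
    simp only [Llin, LinearMap.coe_mk, AddHom.coe_mk]
    rw [coe_e]
  -- pointwise versions of the structure hypotheses
  have hcomm' : ∀ v : V, h (J v) = J (h v) := fun v => by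
    simpa using LinearMap.ext_iff.mp hcomm v
  have hJ2' : ∀ v : V, J (J v) = -v := fun v => by
    simpa using LinearMap.ext_iff.mp hJ2 v
  -- A = J ∘ h₀
  have hAJ : A = J ∘ₗ h₀ := by
    apply LinearMap.ext
    intro x
    apply ext_inner_right ℝ
    intro y
    rw [hA]
    exact (hρ x y).symm
  -- adjoint h₀ = h₀
  have hadj : LinearMap.adjoint h₀ = h₀ := by
    symm
    rw [LinearMap.eq_adjoint_iff]
    exact h₀sym
  -- compute the derivative value
  have hval : Llin (-(e h)) = LinearMap.trace ℝ V (h ∘ₗ LinearMap.adjoint h₀) := by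
    have hcoe : ((-(e h) : V →L[ℝ] V) : Module.End ℝ V) = -h := by
      simp [ContinuousLinearMap.coe_neg, coe_e]
    simp only [Llin, LinearMap.coe_mk, AddHom.coe_mk, hcoe]
    congr 1
    rw [hadj, hAJ]
    ext x
    simp only [LinearMap.comp_apply, LinearMap.neg_apply, map_neg]
    rw [hcomm' (h₀ x), hJ2' (h (h₀ x)), neg_neg]
  have final : HasDerivAt (fun t : ℝ =>
      LinearMap.trace ℝ V (J ∘ₗ Ring.inverse (1 + t • h) ∘ₗ A))
      (LinearMap.trace ℝ V (h ∘ₗ LinearMap.adjoint h₀)) 0 := by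
    rw [← hval]
    exact key.congr_deriv rfl |>.congr_of_eventuallyEq
      (Filter.Eventually.of_forall fun t => (hfun t).symm)
  exact final.const_mul (-(1/2 : ℝ))
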